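/- Let ρ be a Hermitian complex matrix indexed by (Fin dA × Fin dB × Fin dC) × (Fin dA × Fin dB × Fin dC), and let R_π be the tripartite rearrangement that realigns the first two parties and leaves the third untouched, i.e., the matrix with rows indexed by Fin dA × Fin dA × Fin dC, columns indexed by Fin dB × Fin dB × Fin dC, and entries (R_π)_{(i,i',k),(j,j',k')} = ρ_{(i,j,k),(i',j',k')}. Let σ = (1 2)(3 4) and τ = (2 3)(4 1) in Perm (Fin 4) and let c be the 4-cycle t ↦ t+1 (mod 4). Then trace((R_π * R_πᴴ)^2) = trace((W_σ^A ⊗ W_τ^B ⊗ W_c^C) * ρ^{⊗4}). -/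
import Mathlib

open Matrix

/-- The `m`-fold tensor power of a square matrix, as a matrix on `Fin m → D`. -/
noncomputable def tensorPow {D : Type*} [Fintype D] (ρ : Matrix D D ℂ) (m : ℕ) :
    Matrix (Fin m → D) (Fin m → D) ℂ :=
  Matrix.of fun x y => ∏ t, ρ (x t) (y t)

/-- The per-party permutation operator `W_σ^A ⊗ W_τ^B ⊗ W_υ^C` on `m` copies of a
tripartite system. -/
noncomputable def permOp3 {dA dB dC : ℕ} {m : ℕ} (σ τ υ : Equiv.Perm (Fin m)) :
    Matrix (Fin m → Fin dA × Fin dB × Fin dC) (Fin m → Fin dA × Fin dB × Fin dC) ℂ :=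
  Matrix.of fun x y =>
    if ∀ t, (x t).1 = (y (σ t)).1 ∧ (x t).2.1 = (y (τ t)).2.1 ∧ (x t).2.2 = (y (υ t)).2.2
    then 1 else 0

/-- The tripartite rearrangement realigning the first two parties and leaving the third
untouched: `(R_π)_{(i,i',k),(j,j',k')} = ρ_{(i,j,k),(i',j',k')}`. -/
noncomputable def realignAB {dA dB dC : ℕ}
    (ρ : Matrix (Fin dA × Fin dB × Fin dC) (Fin dA × Fin dB × Fin dC) ℂ) :
    Matrix (Fin dA × Fin dA × Fin dC) (Fin dB × Fin dB × Fin dC) ℂ :=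
  Matrix.of fun p q => ρ (p.1, q.1, p.2.2) (p.2.1, q.2.1, q.2.2)

/-- Auxiliary bijection between four copies of a tripartite system and the
index tuple `(p, p', q, q')` showing up in the fourth realignment moment. -/
def realignIndexEquiv (dA dB dC : ℕ) :
    (Fin 4 → Fin dA × Fin dB × Fin dC) ≃
      ((Fin dA × Fin dA × Fin dC) × (Fin dA × Fin dA × Fin dC) ×
        (Fin dB × Fin dB × Fin dC) × (Fin dB × Fin dB × Fin dC)) where
  toFun y :=
    (((y 1).1, (y 0).1, (y 1).2.2), ((y 3).1, (y 2).1, (y 3).2.2),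
     ((y 1).2.1, (y 2).2.1, (y 2).2.2), ((y 3).2.1, (y 0).2.1, (y 0).2.2))
  invFun z :=
    ![(z.1.2.1, z.2.2.2.2.1, z.2.2.2.2.2),
      (z.1.1, z.2.2.1.1, z.1.2.2),
      (z.2.1.2.1, z.2.2.1.2.1, z.2.2.1.2.2),
      (z.2.1.1, z.2.2.2.1, z.2.1.2.2)]
  left_inv y := by
    funext t
    fin_cases t <;> simp
  right_inv z := by
    obtain ⟨⟨a, b, c⟩, ⟨d, e, f⟩, ⟨g, h, i⟩, ⟨j, k, l⟩⟩ := z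
    simp

set_option maxHeartbeats 2000000 in
theorem tripartite_realign_fourth_moment {dA dB dC : ℕ}
    (ρ : Matrix (Fin dA × Fin dB × Fin dC) (Fin dA × Fin dB × Fin dC) ℂ)
    (hρ : ρ.IsHermitian) :
    Matrix.trace ((realignAB ρ * (realignAB ρ)ᴴ) ^ 2) =
      Matrix.trace
        (permOp3 (Equiv.swap (0 : Fin 4) 1 * Equiv.swap 2 3)
            (Equiv.swap (1 : Fin 4) 2 * Equiv.swap 3 0)
            (finRotate 4) *
          tensorPow ρ 4) := by
  classical
  have hstar : ∀ u v, star (ρ u v) = ρ v u := fun u v => by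
    rw [← Matrix.conjTranspose_apply, hρ]
  have s0 : (Equiv.swap (0 : Fin 4) 1 * Equiv.swap 2 3 : Equiv.Perm (Fin 4)) 0 = 1 := by decide
  have s1 : (Equiv.swap (0 : Fin 4) 1 * Equiv.swap 2 3 : Equiv.Perm (Fin 4)) 1 = 0 := by decide
  have s2 : (Equiv.swap (0 : Fin 4) 1 * Equiv.swap 2 3 : Equiv.Perm (Fin 4)) 2 = 3 := by decide
  have s3 : (Equiv.swap (0 : Fin 4) 1 * Equiv.swap 2 3 : Equiv.Perm (Fin 4)) 3 = 2 := by decide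
  have t0 : (Equiv.swap (1 : Fin 4) 2 * Equiv.swap 3 0 : Equiv.Perm (Fin 4)) 0 = 3 := by decide
  have t1 : (Equiv.swap (1 : Fin 4) 2 * Equiv.swap 3 0 : Equiv.Perm (Fin 4)) 1 = 2 := by decide
  have t2 : (Equiv.swap (1 : Fin 4) 2 * Equiv.swap 3 0 : Equiv.Perm (Fin 4)) 2 = 1 := by decide
  have t3 : (Equiv.swap (1 : Fin 4) 2 * Equiv.swap 3 0 : Equiv.Perm (Fin 4)) 3 = 0 := by decide
  have c0 : (finRotate 4) (0 : Fin 4) = 1 := by decide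
  have c1 : (finRotate 4) (1 : Fin 4) = 2 := by decide
  have c2 : (finRotate 4) (2 : Fin 4) = 3 := by decide
  have c3 : (finRotate 4) (3 : Fin 4) = 0 := by decide
  have hRHS :
      Matrix.trace
          (permOp3 (Equiv.swap (0 : Fin 4) 1 * Equiv.swap 2 3)
              (Equiv.swap (1 : Fin 4) 2 * Equiv.swap 3 0)
              (finRotate 4) *
            tensorPow ρ 4) =
        ∑ y : Fin 4 → Fin dA × Fin dB × Fin dC,
          (ρ (y 0) ((y 1).1, (y 3).2.1, (y 1).2.2) *
              ρ (y 1) ((y 0).1, (y 2).2.1, (y 2).2.2)) *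
            (ρ (y 2) ((y 3).1, (y 1).2.1, (y 3).2.2) *
              ρ (y 3) ((y 2).1, (y 0).2.1, (y 0).2.2)) := by
    rw [Matrix.trace]
    simp only [Matrix.diag_apply, Matrix.mul_apply, permOp3, tensorPow, Matrix.of_apply]
    rw [Finset.sum_comm]
    refine Finset.sum_congr rfl fun y _ => ?_
    have hx : ∀ x : Fin 4 → Fin dA × Fin dB × Fin dC,
        (∀ t, (x t).1 = (y ((Equiv.swap (0 : Fin 4) 1 * Equiv.swap 2 3 : Equiv.Perm (Fin 4)) t)).1 ∧
            (x t).2.1 = (y ((Equiv.swap (1 : Fin 4) 2 * Equiv.swap 3 0 : Equiv.Perm (Fin 4)) t)).2.1 ∧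
            (x t).2.2 = (y ((finRotate 4) t)).2.2) ↔
          x = fun t => ((y ((Equiv.swap (0 : Fin 4) 1 * Equiv.swap 2 3 : Equiv.Perm (Fin 4)) t)).1,
            (y ((Equiv.swap (1 : Fin 4) 2 * Equiv.swap 3 0 : Equiv.Perm (Fin 4)) t)).2.1,
            (y ((finRotate 4) t)).2.2) := by
      intro x
      constructor
      · intro hc
        funext t
        obtain ⟨h1, h2, h3⟩ := hc t
        exact Prod.ext_iff.mpr ⟨h1, Prod.ext_iff.mpr ⟨h2, h3⟩⟩
      · intro hxe
        subst hxe
        intro t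
        exact ⟨rfl, rfl, rfl⟩
    have step : ∀ x ∈ (Finset.univ : Finset (Fin 4 → Fin dA × Fin dB × Fin dC)),
        (if ∀ t, (x t).1 = (y ((Equiv.swap (0 : Fin 4) 1 * Equiv.swap 2 3 : Equiv.Perm (Fin 4)) t)).1 ∧
            (x t).2.1 = (y ((Equiv.swap (1 : Fin 4) 2 * Equiv.swap 3 0 : Equiv.Perm (Fin 4)) t)).2.1 ∧
            (x t).2.2 = (y ((finRotate 4) t)).2.2 then (1 : ℂ) else 0) *
            ∏ t, ρ (y t) (x t) =
          (if x = fun t => ((y ((Equiv.swap (0 : Fin 4) 1 * Equiv.swap 2 3 : Equiv.Perm (Fin 4)) t)).1,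
              (y ((Equiv.swap (1 : Fin 4) 2 * Equiv.swap 3 0 : Equiv.Perm (Fin 4)) t)).2.1,
              (y ((finRotate 4) t)).2.2) then ∏ t, ρ (y t) (x t) else 0) := by
      intro x _
      rw [if_congr (hx x) rfl rfl, ite_mul, one_mul, zero_mul]
    rw [Finset.sum_congr rfl step, Finset.sum_ite_eq' Finset.univ]
    simp only [Finset.mem_univ, if_true]
    rw [Fin.prod_univ_four]
    simp only [s0, s1, s2, s3, t0, t1, t2, t3, c0, c1, c2, c3]
    ring
  have hLHS :
      Matrix.trace ((realignAB ρ * (realignAB ρ)ᴴ) ^ 2) =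
        ∑ p : Fin dA × Fin dA × Fin dC, ∑ p' : Fin dA × Fin dA × Fin dC,
          ∑ q : Fin dB × Fin dB × Fin dC, ∑ q' : Fin dB × Fin dB × Fin dC,
            (ρ (p.1, q.1, p.2.2) (p.2.1, q.2.1, q.2.2) *
                ρ (p'.2.1, q.2.1, q.2.2) (p'.1, q.1, p'.2.2)) *
              (ρ (p'.1, q'.1, p'.2.2) (p'.2.1, q'.2.1, q'.2.2) *
                ρ (p.2.1, q'.2.1, q'.2.2) (p.1, q'.1, p.2.2)) := by
    rw [pow_two, Matrix.trace]
    simp only [Matrix.diag_apply, Matrix.mul_apply, Matrix.conjTranspose_apply,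
      realignAB, Matrix.of_apply, hstar]
    refine Finset.sum_congr rfl fun p _ => Finset.sum_congr rfl fun p' _ => ?_
    rw [Finset.sum_mul_sum]
  rw [hLHS, hRHS]
  rw [Fintype.sum_equiv (realignIndexEquiv dA dB dC)
      (fun y : Fin 4 → Fin dA × Fin dB × Fin dC =>
        (ρ (y 0) ((y 1).1, (y 3).2.1, (y 1).2.2) *
            ρ (y 1) ((y 0).1, (y 2).2.1, (y 2).2.2)) *
          (ρ (y 2) ((y 3).1, (y 1).2.1, (y 3).2.2) *
            ρ (y 3) ((y 2).1, (y 0).2.1, (y 0).2.2)))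
      (fun z =>
        (ρ (z.1.1, z.2.2.1.1, z.1.2.2) (z.1.2.1, z.2.2.1.2.1, z.2.2.1.2.2) *
            ρ (z.2.1.2.1, z.2.2.1.2.1, z.2.2.1.2.2) (z.2.1.1, z.2.2.1.1, z.2.1.2.2)) *
          (ρ (z.2.1.1, z.2.2.2.1, z.2.1.2.2) (z.2.1.2.1, z.2.2.2.2.1, z.2.2.2.2.2) *
            ρ (z.1.2.1, z.2.2.2.2.1, z.2.2.2.2.2) (z.1.1, z.2.2.2.1, z.1.2.2)))
      (fun y => by simp [realignIndexEquiv]; ring)]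
  simp (config := { maxSteps := 10000000 }) only [Fintype.sum_prod_type]
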